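/- Let Λ ⊆ [0,∞) be closed convex with 0 ∈ Λ and suppose sup Λ ∈ Λ ∩ ℕ when it exists; set Λ₀ = Λ ∩ ℕ. Let ℓ₀ be an invariant pseudo-norm on a finite group G₀ with values in Λ. Define ℓ'(g) = ℓ₀(g) if ℓ₀(g) ∈ Λ₀, and ℓ'(g) = ⌊ℓ₀(g)⌋ + 1 otherwise. Then ℓ' is an invariant pseudo-norm on G₀ with values in Λ₀, and for every g and n ∈ ℕ: ℓ₀(g) ≤ n iff ℓ'(g) ≤ n. -/
import Mathlib


/-- Rounding an invariant `Λ`-valued pseudo-norm on a finite group up to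
`Λ₀ = Λ ∩ ℕ` yields an invariant `Λ₀`-valued pseudo-norm agreeing with the
original on comparisons with natural numbers. -/
theorem stmt_19 {G₀ : Type*} [Group G₀] [Finite G₀] (Λ : Set ℝ)
    (hΛ0 : (0 : ℝ) ∈ Λ) (hΛsub : Λ ⊆ Set.Ici (0 : ℝ))
    (hΛclosed : IsClosed Λ) (hΛconv : Convex ℝ Λ)
    (hsup : ∀ x : ℝ, IsLUB Λ x → x ∈ Λ ∧ ∃ n : ℕ, x = n)
    (ℓ₀ : G₀ → ℝ) (hval : ∀ g, ℓ₀ g ∈ Λ)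
    (h1 : ℓ₀ 1 = 0) (hsymm : ∀ g, ℓ₀ g⁻¹ = ℓ₀ g)
    (htri : ∀ g h, ℓ₀ (g * h) ≤ ℓ₀ g + ℓ₀ h)
    (hinv : ∀ g h, ℓ₀ (h⁻¹ * g * h) = ℓ₀ g)
    (ℓ' : G₀ → ℝ)
    (hdef₁ : ∀ g, (∃ n : ℕ, ℓ₀ g = n) → ℓ' g = ℓ₀ g)
    (hdef₂ : ∀ g, ¬ (∃ n : ℕ, ℓ₀ g = n) → ℓ' g = ⌊ℓ₀ g⌋ + 1) :
    (∀ g, ℓ' g ∈ Λ ∧ ∃ n : ℕ, ℓ' g = n) ∧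
      ℓ' 1 = 0 ∧ (∀ g, ℓ' g⁻¹ = ℓ' g) ∧
      (∀ g h, ℓ' (g * h) ≤ ℓ' g + ℓ' h) ∧
      (∀ g h, ℓ' (h⁻¹ * g * h) = ℓ' g) ∧
      (∀ g (n : ℕ), ℓ₀ g ≤ n ↔ ℓ' g ≤ n) := by
  have hnn : ∀ g, 0 ≤ ℓ₀ g := fun g => hΛsub (hval g)
  -- ℓ' is the ceiling of ℓ₀
  have hc : ∀ g, ℓ' g = (⌈ℓ₀ g⌉ : ℝ) := by
    intro g
    by_cases h : ∃ n : ℕ, ℓ₀ g = n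
    · obtain ⟨n, hn⟩ := h
      rw [hdef₁ g ⟨n, hn⟩, hn]
      simp
    · rw [hdef₂ g h]
      have h1' : ⌈ℓ₀ g⌉ ≤ ⌊ℓ₀ g⌋ + 1 := Int.ceil_le_floor_add_one _
      have h2 : ⌊ℓ₀ g⌋ + 1 ≤ ⌈ℓ₀ g⌉ := by
        by_contra hcc
        push_neg at hcc
        have hle : ⌈ℓ₀ g⌉ ≤ ⌊ℓ₀ g⌋ := by omega
        have hx : ℓ₀ g = (⌊ℓ₀ g⌋ : ℝ) := le_antisymm
          (le_trans (Int.le_ceil _) (by exact_mod_cast hle)) (Int.floor_le _)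
        have h0 : 0 ≤ ⌊ℓ₀ g⌋ := Int.floor_nonneg.2 (hnn g)
        have hcast : ((⌊ℓ₀ g⌋.toNat : ℕ) : ℝ) = ((⌊ℓ₀ g⌋ : ℤ) : ℝ) := by
          exact_mod_cast Int.toNat_of_nonneg h0
        exact h ⟨⌊ℓ₀ g⌋.toNat, by rw [hcast]; exact hx⟩
      have : ⌈ℓ₀ g⌉ = ⌊ℓ₀ g⌋ + 1 := le_antisymm h1' h2
      rw [this]; push_cast; ring
  -- absorption lemma via convexity
  have habs : ∀ x : ℝ, 0 ≤ x → (∃ y ∈ Λ, x ≤ y) → x ∈ Λ := by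
    rintro x hx ⟨y, hy, hxy⟩
    have hseg := hΛconv.segment_subset hΛ0 hy
    have : x ∈ segment ℝ (0 : ℝ) y := by
      rw [segment_eq_Icc (le_trans hx hxy)]
      exact ⟨hx, hxy⟩
    exact hseg this
  have hnonneg' : ∀ g, 0 ≤ ℓ' g := by
    intro g; rw [hc g]
    exact_mod_cast Int.ceil_nonneg (hnn g)
  refine ⟨?_, ?_, ?_, ?_, ?_, ?_⟩
  · intro g
    constructor
    · -- membership in Λ
      by_cases h : ∃ n : ℕ, ℓ₀ g = n
      · rw [hdef₁ g h]; exact hval g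
      · rw [hdef₂ g h]
        have hfx : 0 ≤ (⌊ℓ₀ g⌋ : ℝ) + 1 := by
          have h0 : (0:ℝ) ≤ (⌊ℓ₀ g⌋ : ℝ) := by exact_mod_cast Int.floor_nonneg.2 (hnn g)
          linarith
        by_cases hb : BddAbove Λ
        · have hne : Λ.Nonempty := ⟨0, hΛ0⟩
          have hlub : IsLUB Λ (sSup Λ) := isLUB_csSup hne hb
          obtain ⟨hmem, N, hN⟩ := hsup _ hlub
          have hle : ℓ₀ g ≤ (N : ℝ) := hN ▸ le_csSup hb (hval g)
          have hlt : ℓ₀ g < (N : ℝ) := lt_of_le_of_ne hle (fun he => h ⟨N, he⟩)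
          have hfl : ⌊ℓ₀ g⌋ < (N : ℤ) := Int.floor_lt.2 (by exact_mod_cast hlt)
          refine habs _ hfx ⟨(N : ℝ), hN ▸ hmem, ?_⟩
          have : ⌊ℓ₀ g⌋ + 1 ≤ (N : ℤ) := hfl
          exact_mod_cast this
        · rw [not_bddAbove_iff] at hb
          obtain ⟨y, hy, hxy⟩ := hb ((⌊ℓ₀ g⌋ : ℝ) + 1)
          exact habs _ hfx ⟨y, hy, le_of_lt hxy⟩
    · -- natural number value
      rw [hc g]
      have h0 : 0 ≤ ⌈ℓ₀ g⌉ := Int.ceil_nonneg (hnn g)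
      have hcast : ((⌈ℓ₀ g⌉.toNat : ℕ) : ℝ) = ((⌈ℓ₀ g⌉ : ℤ) : ℝ) := by
        exact_mod_cast Int.toNat_of_nonneg h0
      exact ⟨⌈ℓ₀ g⌉.toNat, hcast.symm⟩
  · rw [hdef₁ 1 ⟨0, by simp [h1]⟩, h1]
  · intro g; rw [hc, hc, hsymm]
  · intro g h
    rw [hc (g * h), hc g, hc h]
    have hle : ℓ₀ (g * h) ≤ ((⌈ℓ₀ g⌉ + ⌈ℓ₀ h⌉ : ℤ) : ℝ) :=
      le_trans (htri g h) (by push_cast; gcongr <;> exact Int.le_ceil _)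
    have : ⌈ℓ₀ (g * h)⌉ ≤ ⌈ℓ₀ g⌉ + ⌈ℓ₀ h⌉ := Int.ceil_le.2 hle
    exact_mod_cast this
  · intro g h; rw [hc, hc, hinv]
  · intro g n
    rw [hc g]
    constructor
    · intro hle
      have : ⌈ℓ₀ g⌉ ≤ (n : ℤ) := Int.ceil_le.2 (by exact_mod_cast hle)
      exact_mod_cast this
    · intro hle
      exact le_trans (Int.le_ceil _) hle
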